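/- There exist a real polynomial p and real numbers a < b < c < d with q(a,b), q(b,d), q(d,c), q(c,a) all nonzero (q being the symmetric polynomial with p(x) − p(y) = (x−y)q(x,y)), such that the secant map S_p has the periodic orbit of minimal period four (a,b) ↦ (b,d) ↦ (d,c) ↦ (c,a) ↦ (a,b) (i.e., sec(a,b) = d, sec(b,d) = c, sec(d,c) = a, sec(c,a) = b), and moreover this orbit is attracting: the product Λ = DS(a,b)·DS(b,d)·DS(d,c)·DS(c,a) of the Jacobian matrices of S along the orbit satisfies det Λ = 0 and |trace Λ| < 1, so both eigenvalues of Λ have modulus strictly less than 1. -/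

import Mathlib

open Polynomial Filter Topology

/-- The symmetric polynomial `q(x,y)` associated to `p`, satisfying
`p(x) - p(y) = (x - y) * secQ p x y`. -/
noncomputable def secQ (p : Polynomial ℝ) (x y : ℝ) : ℝ :=
  ∑ j ∈ Finset.range (p.natDegree + 1),
    p.coeff j * ∑ i ∈ Finset.range j, x ^ i * y ^ (j - 1 - i)

/-- Partial derivative of `secQ` in the first variable. -/
noncomputable def secQx (p : Polynomial ℝ) (x y : ℝ) : ℝ := deriv (fun t => secQ p t y) x

/-- Partial derivative of `secQ` in the second variable. -/
noncomputable def secQy (p : Polynomial ℝ) (x y : ℝ) : ℝ := deriv (fun t => secQ p x t) y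

/-- The Jacobian matrix of the secant map at a point where `secQ p x y ≠ 0`:
`DS(x,y) = [[0,1],[A(x,y),B(x,y)]]` with `A = p(y)·q_x/q²` and `B = p(x)·q_y/q²`. -/
noncomputable def secDS (p : Polynomial ℝ) (x y : ℝ) : Matrix (Fin 2) (Fin 2) ℝ :=
  !![0, 1;
     Polynomial.eval y p * secQx p x y / (secQ p x y) ^ 2,
     Polynomial.eval x p * secQy p x y / (secQ p x y) ^ 2]

noncomputable def rt5 : ℝ := Real.sqrt 5

noncomputable def P5 : Polynomial ℝ :=
  C 136 * X^5 + C (-1896+404*rt5) * X^4 + C (4601-1347*rt5) * X^3 +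
  C (-2841+943*rt5) * X^2 + C (-810+270*rt5) * X^1 + C 1080

lemma hrt : rt5 ^ 2 = 5 := Real.sq_sqrt (by norm_num)

lemma hrt_nonneg : (0:ℝ) ≤ rt5 := Real.sqrt_nonneg 5

lemma hrt_lb : (2.2360:ℝ) < rt5 := by nlinarith [hrt, hrt_nonneg]

lemma hrt_ub : rt5 < 2.2361 := by nlinarith [hrt, hrt_nonneg]

lemma natDegree_P5 : P5.natDegree = 5 := by unfold P5; compute_degree!

lemma coeffP5_0 : P5.coeff 0 = 1080 := by
  unfold P5; simp only [coeff_add, coeff_C_mul, coeff_X_pow, coeff_C]; norm_num; try ring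

lemma coeffP5_1 : P5.coeff 1 = (-810) + 270*rt5 := by
  unfold P5; simp only [coeff_add, coeff_C_mul, coeff_X_pow, coeff_C]; norm_num; try ring

lemma coeffP5_2 : P5.coeff 2 = (-2841) + 943*rt5 := by
  unfold P5; simp only [coeff_add, coeff_C_mul, coeff_X_pow, coeff_C]; norm_num; try ring

lemma coeffP5_3 : P5.coeff 3 = 4601 + (-1347)*rt5 := by
  unfold P5; simp only [coeff_add, coeff_C_mul, coeff_X_pow, coeff_C]; norm_num; try ring

lemma coeffP5_4 : P5.coeff 4 = (-1896) + 404*rt5 := by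
  unfold P5; simp only [coeff_add, coeff_C_mul, coeff_X_pow, coeff_C]; norm_num; try ring

lemma coeffP5_5 : P5.coeff 5 = 136 := by
  unfold P5; simp only [coeff_add, coeff_C_mul, coeff_X_pow, coeff_C]; norm_num; try ring

lemma eval_P5 (x : ℝ) : P5.eval x =
    136*x^5 + (-1896+404*rt5)*x^4 + (4601-1347*rt5)*x^3 + (-2841+943*rt5)*x^2
      + (-810+270*rt5)*x + 1080 := by
  simp only [P5, eval_add, eval_mul, eval_pow, eval_C, eval_X]; ring

lemma secQ_P5 (x y : ℝ) : secQ P5 x y =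
    (-810+270*rt5) + (-2841+943*rt5)*(x+y) + (4601-1347*rt5)*(x^2+x*y+y^2)
      + (-1896+404*rt5)*(x^3+x^2*y+x*y^2+y^3)
      + 136*(x^4+x^3*y+x^2*y^2+x*y^3+y^4) := by
  unfold secQ
  rw [natDegree_P5]
  simp only [Finset.sum_range_succ, Finset.sum_range_zero,
    coeffP5_0, coeffP5_1, coeffP5_2, coeffP5_3, coeffP5_4, coeffP5_5]
  norm_num
  ring

lemma deriv_poly4 (C0 C1 C2 C3 C4 x : ℝ) :
    deriv (fun t : ℝ => C0 + C1*t^1 + C2*t^2 + C3*t^3 + C4*t^4) x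
      = C1 + 2*C2*x + 3*C3*x^2 + 4*C4*x^3 := by
  have h := ((((hasDerivAt_const x C0).add ((hasDerivAt_pow 1 x).const_mul C1)).add
      ((hasDerivAt_pow 2 x).const_mul C2)).add ((hasDerivAt_pow 3 x).const_mul C3)).add
      ((hasDerivAt_pow 4 x).const_mul C4)
  rw [show (fun t : ℝ => C0 + C1*t^1 + C2*t^2 + C3*t^3 + C4*t^4) = ((((fun _ => C0) + fun y => C1 * y ^ 1) + fun y => C2 * y ^ 2) + fun y => C3 * y ^ 3) + fun y => C4 * y ^ 4 from rfl, h.deriv]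
  push_cast
  ring

lemma secQx_P5 (x y : ℝ) : secQx P5 x y =
    ((-2841+943*rt5) + (4601-1347*rt5)*y + (-1896+404*rt5)*y^2 + 136*y^3)
      + 2*((4601-1347*rt5) + (-1896+404*rt5)*y + 136*y^2)*x
      + 3*((-1896+404*rt5) + 136*y)*x^2 + 544*x^3 := by
  have h : (fun t : ℝ => secQ P5 t y) = (fun t : ℝ =>
      ((-810+270*rt5) + (-2841+943*rt5)*y + (4601-1347*rt5)*y^2
        + (-1896+404*rt5)*y^3 + 136*y^4)
      + ((-2841+943*rt5) + (4601-1347*rt5)*y + (-1896+404*rt5)*y^2 + 136*y^3)*t^1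
      + ((4601-1347*rt5) + (-1896+404*rt5)*y + 136*y^2)*t^2
      + ((-1896+404*rt5) + 136*y)*t^3 + 136*t^4) := by
    funext t; rw [secQ_P5]; ring
  unfold secQx
  rw [h, deriv_poly4]
  ring

lemma secQy_P5 (x y : ℝ) : secQy P5 x y =
    ((-2841+943*rt5) + (4601-1347*rt5)*x + (-1896+404*rt5)*x^2 + 136*x^3)
      + 2*((4601-1347*rt5) + (-1896+404*rt5)*x + 136*x^2)*y
      + 3*((-1896+404*rt5) + 136*x)*y^2 + 544*y^3 := by
  have h : (fun t : ℝ => secQ P5 x t) = (fun t : ℝ =>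
      ((-810+270*rt5) + (-2841+943*rt5)*x + (4601-1347*rt5)*x^2
        + (-1896+404*rt5)*x^3 + 136*x^4)
      + ((-2841+943*rt5) + (4601-1347*rt5)*x + (-1896+404*rt5)*x^2 + 136*x^3)*t^1
      + ((4601-1347*rt5) + (-1896+404*rt5)*x + 136*x^2)*t^2
      + ((-1896+404*rt5) + 136*x)*t^3 + 136*t^4) := by
    funext t; rw [secQ_P5]; ring
  unfold secQy
  rw [h, deriv_poly4]
  ring

lemma pv_0 : P5.eval 0 = 1080 := by
  rw [eval_P5]; ring

lemma pv_1 : P5.eval 1 = 270 + 270*rt5 := by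
  rw [eval_P5]; ring

lemma pv_2 : P5.eval 2 = (-1080) := by
  rw [eval_P5]; ring

lemma pv_d : P5.eval (3+rt5) = (-1620) + (-540)*rt5 := by
  rw [eval_P5]; linear_combination (4320 + 7425*rt5 + 3645*rt5^2 + 540*rt5^3) * hrt

lemma qv_ab : secQ P5 0 1 = (-810) + 270*rt5 := by
  rw [secQ_P5]; ring

lemma qxv_ab : secQx P5 0 1 = 0 := by
  rw [secQx_P5]; ring

lemma qyv_ab : secQy P5 0 1 = 1217 + (-539)*rt5 := by
  rw [secQy_P5]; ring

lemma qne_ab : secQ P5 0 1 ≠ 0 := by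
  rw [qv_ab]; exact ne_of_lt (by nlinarith [hrt_lb, hrt_ub])

lemma qv_bd : secQ P5 1 (3+rt5) = (-270) + (-270)*rt5 := by
  rw [secQ_P5]; linear_combination (2295 + 2565*rt5 + 540*rt5^2) * hrt

lemma qxv_bd : secQx P5 1 (3+rt5) = 1349 + (-675)*rt5 := by
  rw [secQx_P5]; linear_combination (1485 + 540*rt5) * hrt

lemma qyv_bd : secQy P5 1 (3+rt5) = 9224 + 2720*rt5 := by
  rw [secQy_P5]; linear_combination (5002 + 1756*rt5) * hrt

lemma qne_bd : secQ P5 1 (3+rt5) ≠ 0 := by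
  rw [qv_bd]; exact ne_of_lt (by nlinarith [hrt_lb, hrt_ub])

lemma qv_dc : secQ P5 (3+rt5) 2 = (-540) := by
  rw [secQ_P5]; linear_combination (4320 + 3105*rt5 + 540*rt5^2) * hrt

lemma qxv_dc : secQx P5 (3+rt5) 2 = 9913 + 4481*rt5 := by
  rw [secQx_P5]; linear_combination (6218 + 1756*rt5) * hrt

lemma qyv_dc : secQy P5 (3+rt5) 2 = (-2561) + 1755*rt5 := by
  rw [secQy_P5]; linear_combination (2565 + 540*rt5) * hrt

lemma qne_dc : secQ P5 (3+rt5) 2 ≠ 0 := by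
  rw [qv_dc]; exact ne_of_lt (by nlinarith [hrt_lb, hrt_ub])

lemma qv_ca : secQ P5 2 0 = (-1080) := by
  rw [secQ_P5]; ring

lemma qxv_ca : secQx P5 2 0 = (-2837) + 403*rt5 := by
  rw [secQx_P5]; ring

lemma qyv_ca : secQy P5 2 0 = (-135) + (-135)*rt5 := by
  rw [secQy_P5]; ring

lemma qne_ca : secQ P5 2 0 ≠ 0 := by
  rw [qv_ca]; exact ne_of_lt (by nlinarith [hrt_lb, hrt_ub])

lemma DS_ab : secDS P5 0 1 = !![0, 1; 0, (217/270) + (-61/270)*rt5] := by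
  have e1 : Polynomial.eval 1 P5 * secQx P5 0 1 / (secQ P5 0 1) ^ 2 = 0 := by
    rw [pv_1, qxv_ab, qv_ab, div_eq_iff (pow_ne_zero 2 (show ((-810) + 270*rt5 : ℝ) ≠ 0 from by nlinarith [hrt_lb, hrt_ub]))]
    ring
  have e2 : Polynomial.eval 0 P5 * secQy P5 0 1 / (secQ P5 0 1) ^ 2 = (217/270) + (-61/270)*rt5 := by
    rw [pv_0, qyv_ab, qv_ab, div_eq_iff (pow_ne_zero 2 (show ((-810) + 270*rt5 : ℝ) ≠ 0 from by nlinarith [hrt_lb, hrt_ub]))]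
    linear_combination ((-157410) + 16470*rt5) * hrt
  unfold secDS; rw [e1, e2]

lemma DS_bd : secDS P5 1 (3+rt5) = !![0, 1; (-1349/270) + (5/2)*rt5, (547/135) + (271/45)*rt5] := by
  have e1 : Polynomial.eval (3+rt5) P5 * secQx P5 1 (3+rt5) / (secQ P5 1 (3+rt5)) ^ 2 = (-1349/270) + (5/2)*rt5 := by
    rw [pv_d, qxv_bd, qv_bd, div_eq_iff (pow_ne_zero 2 (show ((-270) + (-270)*rt5 : ℝ) ≠ 0 from by nlinarith [hrt_lb, hrt_ub]))]
    linear_combination (364230 + (-182250)*rt5) * hrt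
  have e2 : Polynomial.eval 1 P5 * secQy P5 1 (3+rt5) / (secQ P5 1 (3+rt5)) ^ 2 = (547/135) + (271/45)*rt5 := by
    rw [pv_1, qyv_bd, qv_bd, div_eq_iff (pow_ne_zero 2 (show ((-270) + (-270)*rt5 : ℝ) ≠ 0 from by nlinarith [hrt_lb, hrt_ub]))]
    linear_combination ((-439020) + (-439020)*rt5) * hrt
  unfold secDS; rw [e1, e2]

lemma DS_dc : secDS P5 (3+rt5) 2 = !![0, 1; (-9913/270) + (-4481/270)*rt5, (-91/45) + (-676/135)*rt5] := by
  have e1 : Polynomial.eval 2 P5 * secQx P5 (3+rt5) 2 / (secQ P5 (3+rt5) 2) ^ 2 = (-9913/270) + (-4481/270)*rt5 := by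
    rw [pv_2, qxv_dc, qv_dc, div_eq_iff (pow_ne_zero 2 (show ((-540) : ℝ) ≠ 0 from by nlinarith [hrt_lb, hrt_ub]))]
    ring
  have e2 : Polynomial.eval (3+rt5) P5 * secQy P5 (3+rt5) 2 / (secQ P5 (3+rt5) 2) ^ 2 = (-91/45) + (-676/135)*rt5 := by
    rw [pv_d, qyv_dc, qv_dc, div_eq_iff (pow_ne_zero 2 (show ((-540) : ℝ) ≠ 0 from by nlinarith [hrt_lb, hrt_ub]))]
    linear_combination ((-947700)) * hrt
  unfold secDS; rw [e1, e2]

lemma DS_ca : secDS P5 2 0 = !![0, 1; (-2837/1080) + (403/1080)*rt5, (1/8) + (1/8)*rt5] := by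
  have e1 : Polynomial.eval 0 P5 * secQx P5 2 0 / (secQ P5 2 0) ^ 2 = (-2837/1080) + (403/1080)*rt5 := by
    rw [pv_0, qxv_ca, qv_ca, div_eq_iff (pow_ne_zero 2 (show ((-1080) : ℝ) ≠ 0 from by nlinarith [hrt_lb, hrt_ub]))]
    ring
  have e2 : Polynomial.eval 2 P5 * secQy P5 2 0 / (secQ P5 2 0) ^ 2 = (1/8) + (1/8)*rt5 := by
    rw [pv_2, qyv_ca, qv_ca, div_eq_iff (pow_ne_zero 2 (show ((-1080) : ℝ) ≠ 0 from by nlinarith [hrt_lb, hrt_ub]))]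
    ring
  unfold secDS; rw [e1, e2]

theorem secant_attracting_period_four :
    ∃ (p : Polynomial ℝ) (a b c d : ℝ),
      2 ≤ p.natDegree ∧
      a < b ∧ b < c ∧ c < d ∧
      secQ p a b ≠ 0 ∧ secQ p b d ≠ 0 ∧ secQ p d c ≠ 0 ∧ secQ p c a ≠ 0 ∧
      (b * secQ p a b - p.eval b) / secQ p a b = d ∧
      (d * secQ p b d - p.eval d) / secQ p b d = c ∧
      (c * secQ p d c - p.eval c) / secQ p d c = a ∧
      (a * secQ p c a - p.eval a) / secQ p c a = b ∧
      (secDS p a b * secDS p b d * secDS p d c * secDS p c a).det = 0 ∧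
      |(secDS p a b * secDS p b d * secDS p d c * secDS p c a).trace| < 1 := by
  refine ⟨P5, 0, 1, 2, 3+rt5, ?_, by norm_num, by norm_num, by nlinarith [hrt_lb], qne_ab,
    qne_bd, qne_dc, qne_ca, ?_, ?_, ?_, ?_, ?_, ?_⟩
  · rw [natDegree_P5]; norm_num
  · rw [pv_1, div_eq_iff qne_ab, qv_ab]
    linear_combination ((-270)) * hrt
  · rw [pv_d, div_eq_iff qne_bd, qv_bd]
    linear_combination ((-270)) * hrt
  · rw [pv_2, div_eq_iff qne_dc, qv_dc]
    ring
  · rw [pv_0, div_eq_iff qne_ca, qv_ca]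
    ring
  · rw [Matrix.det_mul, Matrix.det_mul, Matrix.det_mul, DS_ab, Matrix.det_fin_two_of]
    ring
  · have htr : (secDS P5 0 1 * secDS P5 1 (3+rt5) * secDS P5 (3+rt5) 2
        * secDS P5 2 0).trace = (431055149/2460375) + (-770805041/9841500)*rt5 := by
      rw [DS_ab, DS_bd, DS_dc, DS_ca, Matrix.mul_fin_two, Matrix.mul_fin_two,
        Matrix.mul_fin_two, Matrix.trace_fin_two_of]
      linear_combination ((274446269/5248800) + (787033889/78732000)*rt5 + (2793739/3280500)*rt5^2) * hrt
    rw [htr, abs_lt]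
    constructor <;> nlinarith [hrt_lb, hrt_ub]
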